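/- Let N, M₁, M₂ be positive integers with M₁ ≤ M₂ − 1 and M₁ < N, let m, n be integers with 0 ≤ n ≤ m ≤ M₁, and set ℓ_m = min(M₁ − m, n). Let z_1, …, z_{M₁} ∈ ℂ be pairwise distinct and w_1, …, w_{M₂} ∈ ℂ be pairwise distinct. Then Σ_{i=1}^{M₁} Σ_{k=1}^{M₂} z_i w_k ∏_{j≠i} ((z_j − w_k)/(z_j − z_i)) · ∏_{l≠k} ((w_l − z_i)/(w_l − w_k)) · Σ_{γ=1}^{N} Σ_{δ=1}^{N} η̄_γ^{m} η̄_δ^{n} ∏_{j≠i} (η_γ − z_j)(η_δ − z_j) = (M₁ − m) Σ_{γ,δ=1}^{N} η̄_γ^{m} η̄_δ^{n} ∏_{i=1}^{M₁} (η_γ − z_i)(η_δ − z_i) − Σ_{ℓ=1}^{ℓ_m} (m − n + 2ℓ) Σ_{γ,δ=1}^{N} η̄_γ^{m+ℓ} η̄_δ^{n−ℓ} ∏_{i=1}^{M₁} (η_γ − z_i)(η_δ − z_i). -/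

import Mathlib

open Finset Polynomial

/-- The `N`-th roots of unity: `η_γ = exp(2πiγ/N)` for `γ = 1, …, N`. -/
noncomputable def η (N : ℕ) (γ : Fin N) : ℂ :=
  Complex.exp (2 * Real.pi * Complex.I * ((γ : ℕ) + 1) / N)

section Aux

lemma eta_eq (N : ℕ) (hN : (N:ℂ) ≠ 0) (γ : Fin N) :
    η N γ = Complex.exp (2 * Real.pi * Complex.I / N) ^ ((γ : ℕ) + 1) := by
  rw [← Complex.exp_nat_mul, η]
  congr 1
  push_cast
  field_simp

lemma conj_eta (N : ℕ) (γ : Fin N) :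
    (starRingEnd ℂ) (η N γ) = (η N γ)⁻¹ := by
  rw [η, ← Complex.exp_conj, ← Complex.exp_neg]
  congr 1
  simp only [map_div₀, map_mul, Complex.conj_I, map_ofNat, Complex.conj_ofReal, map_natCast,
    map_add, map_one, neg_div]
  ring

lemma ortho (N : ℕ) (hN : 0 < N) (a r : ℕ) (ha : a < N) (hr : r < N) :
    ∑ γ : Fin N, (starRingEnd ℂ) (η N γ) ^ a * (η N γ) ^ r
      = if r = a then (N : ℂ) else 0 := by
  have hNC : (N:ℂ) ≠ 0 := Nat.cast_ne_zero.mpr hN.ne'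
  set ζ : ℂ := Complex.exp (2 * Real.pi * Complex.I / N) with hζ
  have hζ0 : ζ ≠ 0 := Complex.exp_ne_zero _
  have hprim : IsPrimitiveRoot ζ N := Complex.isPrimitiveRoot_exp N hN.ne'
  set ω : ℂ := ζ ^ ((r : ℤ) - (a : ℤ)) with hω
  have hterm : ∀ γ : Fin N,
      (starRingEnd ℂ) (η N γ) ^ a * (η N γ) ^ r = ω ^ ((γ : ℕ) + 1) := by
    intro γ
    rw [conj_eta, eta_eq N hNC, ← hζ, hω]
    rw [inv_pow, ← pow_mul, ← pow_mul,
      ← zpow_natCast ζ (((γ:ℕ)+1)*a), ← zpow_natCast ζ (((γ:ℕ)+1)*r),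
      ← zpow_neg, ← zpow_add₀ hζ0,
      ← zpow_natCast (ζ ^ ((r:ℤ) - (a:ℤ))) ((γ:ℕ)+1), ← zpow_mul]
    congr 1
    push_cast
    ring
  rw [Finset.sum_congr rfl (fun γ _ => hterm γ)]
  have hωN : ω ^ N = 1 := by
    rw [hω, ← zpow_natCast, ← zpow_mul, mul_comm, zpow_mul, zpow_natCast, hprim.pow_eq_one,
      one_zpow]
  by_cases hra : r = a
  · subst hra
    simp [hω]
  · have hω1 : ω ≠ 1 := by
      intro h
      have : (N:ℤ) ∣ ((r:ℤ) - (a:ℤ)) := (hprim.zpow_eq_one_iff_dvd _).mp h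
      have habs : |(r:ℤ) - (a:ℤ)| < (N:ℤ) := by
        rw [abs_sub_lt_iff]; omega
      have h0 : (r:ℤ) - (a:ℤ) = 0 := Int.eq_zero_of_abs_lt_dvd this habs
      omega
    simp only [if_neg hra]
    have : ∀ g : ℕ, ω ^ (g + 1) = ω ^ g * ω := fun g => pow_succ ω g
    rw [Fin.sum_univ_eq_sum_range (fun g => ω ^ (g + 1)) N]
    simp_rw [this]
    rw [← Finset.sum_mul, geom_sum_eq hω1, hωN, sub_self, zero_div, zero_mul]

lemma coeff_extract (N : ℕ) (hN : 0 < N) (P : Polynomial ℂ) (hP : P.natDegree < N)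
    (a : ℕ) (ha : a < N) :
    ∑ γ : Fin N, (starRingEnd ℂ) (η N γ) ^ a * P.eval (η N γ) = N * P.coeff a := by
  have h1 : ∀ γ : Fin N, P.eval (η N γ) = ∑ r ∈ range N, P.coeff r * (η N γ) ^ r :=
    fun γ => Polynomial.eval_eq_sum_range' hP _
  calc ∑ γ : Fin N, (starRingEnd ℂ) (η N γ) ^ a * P.eval (η N γ)
      = ∑ γ : Fin N, ∑ r ∈ range N,
          P.coeff r * ((starRingEnd ℂ) (η N γ) ^ a * (η N γ) ^ r) := by
        refine Finset.sum_congr rfl fun γ _ => ?_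
        rw [h1 γ, Finset.mul_sum]
        exact Finset.sum_congr rfl fun r _ => by ring
    _ = ∑ r ∈ range N, P.coeff r *
          ∑ γ : Fin N, (starRingEnd ℂ) (η N γ) ^ a * (η N γ) ^ r := by
        rw [Finset.sum_comm]
        exact Finset.sum_congr rfl fun r _ => by rw [Finset.mul_sum]
    _ = ∑ r ∈ range N, P.coeff r * (if r = a then (N:ℂ) else 0) := by
        refine Finset.sum_congr rfl fun r hr => ?_
        rw [ortho N hN a r ha (mem_range.mp hr)]
    _ = N * P.coeff a := by
        rw [Finset.sum_eq_single a]
        · rw [if_pos rfl]; ring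
        · intro b _ hb; rw [if_neg hb, mul_zero]
        · intro h; exact absurd (mem_range.mpr ha) h

lemma lagrange_eval {M : ℕ} (w : Fin M → ℂ) (hw : Function.Injective w)
    (f : Polynomial ℂ) (hf : f.degree < M) (x : ℂ) :
    f.eval x = ∑ k : Fin M, f.eval (w k) *
      ∏ l ∈ univ.erase k, (x - w l) / (w k - w l) := by
  have hcard : (#(univ : Finset (Fin M)) : WithBot ℕ) = M := by simp
  have h := Lagrange.eq_interpolate (s := univ) (v := w) (f := f)
    (hw.injOn) (by rw [hcard]; exact hf)
  conv_lhs => rw [h]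
  rw [Lagrange.interpolate_apply, eval_finset_sum]
  refine Finset.sum_congr rfl fun k _ => ?_
  rw [eval_mul, eval_C, Lagrange.basis, eval_prod]
  congr 1
  refine Finset.prod_congr rfl fun l hl => ?_
  rw [Lagrange.basisDivisor, eval_mul, eval_C, eval_sub, eval_X, eval_C]
  rw [div_eq_inv_mul]

noncomputable def Pz {M₁ : ℕ} (z : Fin M₁ → ℂ) : Polynomial ℂ :=
  ∏ i, (X - C (z i))

noncomputable def Qz {M₁ : ℕ} (z : Fin M₁ → ℂ) (i : Fin M₁) : Polynomial ℂ :=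
  ∏ j ∈ univ.erase i, (X - C (z j))

lemma Pz_natDegree {M₁ : ℕ} (z : Fin M₁ → ℂ) : (Pz z).natDegree = M₁ := by
  rw [Pz, natDegree_prod_of_monic _ _ (fun i _ => monic_X_sub_C (z i))]
  simp

lemma Qz_natDegree {M₁ : ℕ} (z : Fin M₁ → ℂ) (i : Fin M₁) :
    (Qz z i).natDegree = M₁ - 1 := by
  rw [Qz, natDegree_prod_of_monic _ _ (fun j _ => monic_X_sub_C (z j))]
  simp [Finset.card_erase_of_mem]

lemma Pz_coeff_zero {M₁ : ℕ} (z : Fin M₁ → ℂ) {j : ℕ} (hj : M₁ < j) :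
    (Pz z).coeff j = 0 :=
  coeff_eq_zero_of_natDegree_lt (by rw [Pz_natDegree]; exact hj)

lemma Pz_factor {M₁ : ℕ} (z : Fin M₁ → ℂ) (i : Fin M₁) :
    Pz z = (X - C (z i)) * Qz z i :=
  (Finset.mul_prod_erase univ _ (mem_univ i)).symm

lemma L1a {M₁ : ℕ} (z : Fin M₁ → ℂ) (i : Fin M₁) :
    z i * (Qz z i).coeff 0 = - (Pz z).coeff 0 := by
  have := congrArg (fun p => Polynomial.coeff p 0) (Pz_factor z i)
  simp only [sub_mul, coeff_sub, coeff_C_mul, mul_coeff_zero, coeff_X_zero, zero_mul,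
    coeff_C_zero] at this
  rw [this]; ring

lemma L1b {M₁ : ℕ} (z : Fin M₁ → ℂ) (i : Fin M₁) (a : ℕ) :
    z i * (Qz z i).coeff (a + 1) = (Qz z i).coeff a - (Pz z).coeff (a + 1) := by
  have := congrArg (fun p => Polynomial.coeff p (a + 1)) (Pz_factor z i)
  simp only [sub_mul, coeff_sub, coeff_C_mul, coeff_X_mul] at this
  rw [this]; ring

lemma L2 {M₁ : ℕ} (z : Fin M₁ → ℂ) (a : ℕ) :
    ∑ i, (Qz z i).coeff a = ((a : ℂ) + 1) * (Pz z).coeff (a + 1) := by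
  have hD : derivative (Pz z) = ∑ i, Qz z i := by
    rw [Pz, Finset.prod_eq_multiset_prod, derivative_prod, ← Finset.sum_eq_multiset_sum]
    refine Finset.sum_congr rfl fun i _ => ?_
    rw [derivative_sub, derivative_X, derivative_C, sub_zero, mul_one, Qz,
      Finset.prod_eq_multiset_prod, Finset.erase_val]
  have := congrArg (fun p => Polynomial.coeff p a) hD
  simp only [coeff_derivative, finset_sum_coeff] at this
  rw [← this]; ring

lemma L3 {M₁ : ℕ} (z : Fin M₁ → ℂ) (a : ℕ) :
    ∑ i, z i * (Qz z i).coeff a = ((a : ℂ) - M₁) * (Pz z).coeff a := by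
  cases a with
  | zero =>
      rw [Finset.sum_congr rfl fun i _ => L1a z i, Finset.sum_const]
      simp only [card_univ, Fintype.card_fin, nsmul_eq_mul, Nat.cast_zero]
      ring
  | succ a =>
      rw [Finset.sum_congr rfl fun i _ => L1b z i a, Finset.sum_sub_distrib, L2,
        Finset.sum_const]
      simp only [card_univ, Fintype.card_fin, nsmul_eq_mul]
      push_cast
      ring

lemma claimC {M₁ : ℕ} (z : Fin M₁ → ℂ) :
    ∀ n m : ℕ, n ≤ m →
    ∑ i, z i ^ 2 * (Qz z i).coeff m * (Qz z i).coeff n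
      = ((M₁ : ℂ) - m) * (Pz z).coeff m * (Pz z).coeff n
        - ∑ ℓ ∈ Finset.Icc 1 (min (M₁ - m) n),
            ((m : ℂ) - n + 2 * ℓ) * (Pz z).coeff (m + ℓ) * (Pz z).coeff (n - ℓ) := by
  intro n
  induction n with
  | zero =>
      intro m _
      rw [Nat.min_zero]
      simp only [Finset.Icc_eq_empty_of_lt Nat.zero_lt_one, Finset.sum_empty, sub_zero]
      calc ∑ i, z i ^ 2 * (Qz z i).coeff m * (Qz z i).coeff 0
          = ∑ i, (- (Pz z).coeff 0) * (z i * (Qz z i).coeff m) := by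
            refine Finset.sum_congr rfl fun i _ => ?_
            rw [← L1a z i]; ring
        _ = (- (Pz z).coeff 0) * (((m : ℂ) - M₁) * (Pz z).coeff m) := by
            rw [← Finset.mul_sum, L3]
        _ = ((M₁ : ℂ) - m) * (Pz z).coeff m * (Pz z).coeff 0 := by ring
  | succ n IH =>
      intro m hnm
      have key : ∑ i, z i ^ 2 * (Qz z i).coeff m * (Qz z i).coeff (n + 1)
          = (∑ i, z i ^ 2 * (Qz z i).coeff (m + 1) * (Qz z i).coeff n)
            + (Pz z).coeff (m + 1) * (((n : ℂ) - M₁) * (Pz z).coeff n)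
            - (Pz z).coeff (n + 1) * (((m : ℂ) - M₁) * (Pz z).coeff m) := by
        have e1 : ∑ i, z i ^ 2 * (Qz z i).coeff m * (Qz z i).coeff (n + 1)
            = (∑ i, z i * (Qz z i).coeff m * (Qz z i).coeff n)
              - (Pz z).coeff (n + 1) * ∑ i, z i * (Qz z i).coeff m := by
          rw [Finset.mul_sum, ← Finset.sum_sub_distrib]
          refine Finset.sum_congr rfl fun i _ => ?_
          have h := L1b z i n
          linear_combination (z i * (Qz z i).coeff m) * h
        have e2 : ∑ i, z i ^ 2 * (Qz z i).coeff (m + 1) * (Qz z i).coeff n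
            = (∑ i, z i * (Qz z i).coeff m * (Qz z i).coeff n)
              - (Pz z).coeff (m + 1) * ∑ i, z i * (Qz z i).coeff n := by
          rw [Finset.mul_sum, ← Finset.sum_sub_distrib]
          refine Finset.sum_congr rfl fun i _ => ?_
          have h := L1b z i m
          linear_combination (z i * (Qz z i).coeff n) * h
        rw [e1, e2, L3 z m, L3 z n]
        ring
      have hsum : ∑ ℓ ∈ Finset.Icc 1 (min (M₁ - m) (n + 1)),
            ((m : ℂ) - (n + 1 : ℕ) + 2 * ℓ) * (Pz z).coeff (m + ℓ) * (Pz z).coeff (n + 1 - ℓ)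
          = ((m : ℂ) - n + 1) * (Pz z).coeff (m + 1) * (Pz z).coeff n
            + ∑ ℓ ∈ Finset.Icc 1 (min (M₁ - (m + 1)) n),
                (((m + 1 : ℕ) : ℂ) - n + 2 * ℓ) * (Pz z).coeff (m + 1 + ℓ)
                  * (Pz z).coeff (n - ℓ) := by
        by_cases hmM : M₁ ≤ m
        · have h1 : M₁ - m = 0 := by omega
          have h2 : M₁ - (m + 1) = 0 := by omega
          have hc : (Pz z).coeff (m + 1) = 0 := Pz_coeff_zero z (by omega)
          rw [h1, h2, hc]
          simp
        · have hK : min (M₁ - m) (n + 1) = min (M₁ - (m + 1)) n + 1 := by omega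
          set K := min (M₁ - (m + 1)) n with hKdef
          rw [hK, ← Finset.Ico_add_one_right_eq_Icc, ← Finset.Ico_add_one_right_eq_Icc,
            Finset.sum_Ico_eq_sum_range, Finset.sum_Ico_eq_sum_range]
          simp only [Nat.add_sub_cancel, Nat.succ_sub_one]
          rw [Finset.sum_range_succ']
          have hterm : ∀ i ∈ Finset.range K,
              ((m : ℂ) - (n + 1 : ℕ) + 2 * (1 + (i + 1) : ℕ)) * (Pz z).coeff (m + (1 + (i + 1)))
                * (Pz z).coeff (n + 1 - (1 + (i + 1)))
              = (((m + 1 : ℕ) : ℂ) - n + 2 * (1 + i : ℕ)) * (Pz z).coeff (m + 1 + (1 + i))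
                * (Pz z).coeff (n - (1 + i)) := by
            intro i _
            have e₁ : m + (1 + (i + 1)) = m + 1 + (1 + i) := by omega
            have e₂ : n + 1 - (1 + (i + 1)) = n - (1 + i) := by omega
            rw [e₁, e₂]
            push_cast
            ring
          rw [Finset.sum_congr rfl hterm]
          have hlast : ((m : ℂ) - (n + 1 : ℕ) + 2 * (1 + 0 : ℕ)) * (Pz z).coeff (m + (1 + 0))
              * (Pz z).coeff (n + 1 - (1 + 0))
              = ((m : ℂ) - n + 1) * (Pz z).coeff (m + 1) * (Pz z).coeff n := by
            have e : n + 1 - (1 + 0) = n := by omega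
            have e2 : m + (1 + 0) = m + 1 := by omega
            rw [e, e2]
            push_cast
            ring
          rw [hlast]
          ring
      rw [key, IH (m + 1) (by omega), hsum]
      push_cast
      ring

lemma Qz_eval {M₁ : ℕ} (z : Fin M₁ → ℂ) (i : Fin M₁) (x : ℂ) :
    (Qz z i).eval x = ∏ j ∈ univ.erase i, (x - z j) := by
  rw [Qz, eval_prod]
  simp

lemma stepA {M₁ M₂ : ℕ} (h12 : M₁ ≤ M₂ - 1) (hM₂ : 0 < M₂)
    (z : Fin M₁ → ℂ) (hz : Function.Injective z)
    (w : Fin M₂ → ℂ) (hw : Function.Injective w) (i : Fin M₁) :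
    ∑ k : Fin M₂, z i * w k * (∏ j ∈ univ.erase i, (z j - w k) / (z j - z i)) *
        (∏ l ∈ univ.erase k, (w l - z i) / (w l - w k))
      = z i ^ 2 := by
  have hM₁ : 0 < M₁ := i.pos
  set f : Polynomial ℂ := X * Qz z i with hf
  have hdeg : f.degree < M₂ := by
    have h1 : f.natDegree ≤ M₁ := by
      rw [hf]
      refine le_trans (natDegree_mul_le) ?_
      rw [natDegree_X, Qz_natDegree]
      omega
    calc f.degree ≤ (f.natDegree : WithBot ℕ) := degree_le_natDegree
      _ ≤ (M₁ : WithBot ℕ) := by exact_mod_cast h1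
      _ < (M₂ : WithBot ℕ) := by
          rw [Nat.cast_lt]
          omega
  have hfe : ∀ x : ℂ, f.eval x = x * ∏ j ∈ univ.erase i, (x - z j) := by
    intro x
    rw [hf, eval_mul, eval_X, Qz_eval]
  set D : ℂ := ∏ j ∈ univ.erase i, (z i - z j) with hD
  have hD0 : D ≠ 0 := by
    rw [hD]
    refine Finset.prod_ne_zero_iff.mpr fun j hj => ?_
    exact sub_ne_zero_of_ne fun h => (Finset.mem_erase.mp hj).1 ((hz h).symm)
  have hlag := lagrange_eval w hw f hdeg (z i)
  calc ∑ k : Fin M₂, z i * w k * (∏ j ∈ univ.erase i, (z j - w k) / (z j - z i)) *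
        (∏ l ∈ univ.erase k, (w l - z i) / (w l - w k))
      = (z i / D) * ∑ k : Fin M₂, f.eval (w k) *
          ∏ l ∈ univ.erase k, (z i - w l) / (w k - w l) := by
        rw [Finset.mul_sum]
        refine Finset.sum_congr rfl fun k _ => ?_
        have e1 : ∏ j ∈ univ.erase i, (z j - w k) / (z j - z i)
            = (∏ j ∈ univ.erase i, (w k - z j)) / (∏ j ∈ univ.erase i, (z i - z j)) := by
          rw [← Finset.prod_div_distrib]
          exact Finset.prod_congr rfl fun j _ => by
            rw [← neg_div_neg_eq, neg_sub, neg_sub]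
        have e2 : ∏ l ∈ univ.erase k, (w l - z i) / (w l - w k)
            = ∏ l ∈ univ.erase k, (z i - w l) / (w k - w l) := by
          exact Finset.prod_congr rfl fun l _ => by
            rw [← neg_div_neg_eq, neg_sub, neg_sub]
        rw [e1, e2, hfe (w k), ← hD]
        ring
    _ = (z i / D) * f.eval (z i) := by rw [← hlag]
    _ = z i ^ 2 := by
        rw [hfe (z i), ← hD]
        field_simp

lemma double_sum (N : ℕ) (hN : 0 < N) {M : ℕ} (s : Finset (Fin M)) (v : Fin M → ℂ)
    (hs : #s < N) (a b : ℕ) (ha : a < N) (hb : b < N) :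
    ∑ γ : Fin N, ∑ δ : Fin N,
        (starRingEnd ℂ) (η N γ) ^ a * (starRingEnd ℂ) (η N δ) ^ b *
          ∏ j ∈ s, ((η N γ - v j) * (η N δ - v j))
      = ((N : ℂ) * (∏ j ∈ s, (X - C (v j)) : Polynomial ℂ).coeff a) *
        ((N : ℂ) * (∏ j ∈ s, (X - C (v j)) : Polynomial ℂ).coeff b) := by
  set G : Polynomial ℂ := ∏ j ∈ s, (X - C (v j)) with hG
  have hGdeg : G.natDegree < N := by
    rw [hG, natDegree_prod_of_monic _ _ (fun j _ => monic_X_sub_C (v j))]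
    simpa using lt_of_le_of_lt (le_refl _) (by simpa using hs)
  have hGeval : ∀ x : ℂ, G.eval x = ∏ j ∈ s, (x - v j) := by
    intro x
    rw [hG, eval_prod]
    simp
  calc ∑ γ : Fin N, ∑ δ : Fin N,
        (starRingEnd ℂ) (η N γ) ^ a * (starRingEnd ℂ) (η N δ) ^ b *
          ∏ j ∈ s, ((η N γ - v j) * (η N δ - v j))
      = ∑ γ : Fin N, ∑ δ : Fin N,
          ((starRingEnd ℂ) (η N γ) ^ a * G.eval (η N γ)) *
          ((starRingEnd ℂ) (η N δ) ^ b * G.eval (η N δ)) := by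
        refine Finset.sum_congr rfl fun γ _ => Finset.sum_congr rfl fun δ _ => ?_
        rw [Finset.prod_mul_distrib, hGeval, hGeval]
        ring
    _ = (∑ γ : Fin N, (starRingEnd ℂ) (η N γ) ^ a * G.eval (η N γ)) *
        (∑ δ : Fin N, (starRingEnd ℂ) (η N δ) ^ b * G.eval (η N δ)) := by
        rw [Finset.sum_mul_sum]
    _ = ((N : ℂ) * G.coeff a) * ((N : ℂ) * G.coeff b) := by
        rw [coeff_extract N hN G hGdeg a ha, coeff_extract N hN G hGdeg b hb]

end Aux

theorem stmt3 (N M₁ M₂ : ℕ) (hN : 0 < N) (hM₁ : 0 < M₁) (hM₂ : 0 < M₂)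
    (h12 : M₁ ≤ M₂ - 1) (hMN : M₁ < N) (m n : ℕ) (hnm : n ≤ m) (hm : m ≤ M₁)
    (z : Fin M₁ → ℂ) (hz : Function.Injective z)
    (w : Fin M₂ → ℂ) (hw : Function.Injective w) :
    (∑ i : Fin M₁, ∑ k : Fin M₂,
      z i * w k * (∏ j ∈ univ.erase i, (z j - w k) / (z j - z i)) *
        (∏ l ∈ univ.erase k, (w l - z i) / (w l - w k)) *
        ∑ γ : Fin N, ∑ δ : Fin N,
          (starRingEnd ℂ) (η N γ) ^ m * (starRingEnd ℂ) (η N δ) ^ n *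
            ∏ j ∈ univ.erase i, ((η N γ - z j) * (η N δ - z j)))
    = ((M₁ : ℂ) - m) *
        (∑ γ : Fin N, ∑ δ : Fin N,
          (starRingEnd ℂ) (η N γ) ^ m * (starRingEnd ℂ) (η N δ) ^ n *
            ∏ i : Fin M₁, ((η N γ - z i) * (η N δ - z i)))
      - ∑ ℓ ∈ Finset.Icc 1 (min (M₁ - m) n),
          ((m : ℂ) - n + 2 * ℓ) *
            ∑ γ : Fin N, ∑ δ : Fin N,
              (starRingEnd ℂ) (η N γ) ^ (m + ℓ) * (starRingEnd ℂ) (η N δ) ^ (n - ℓ) *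
                ∏ i : Fin M₁, ((η N γ - z i) * (η N δ - z i)) := by
  have hmN : m < N := lt_of_le_of_lt hm hMN
  have hnN : n < N := lt_of_le_of_lt (le_trans hnm hm) hMN
  -- Rewrite inner double sums over (γ, δ) via coefficients
  have hQcard : ∀ i : Fin M₁, #(univ.erase i) < N := by
    intro i
    rw [Finset.card_erase_of_mem (mem_univ i), Finset.card_univ, Fintype.card_fin]
    omega
  have hT : ∀ i : Fin M₁,
      (∑ γ : Fin N, ∑ δ : Fin N,
        (starRingEnd ℂ) (η N γ) ^ m * (starRingEnd ℂ) (η N δ) ^ n *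
          ∏ j ∈ univ.erase i, ((η N γ - z j) * (η N δ - z j)))
      = ((N : ℂ) * (Qz z i).coeff m) * ((N : ℂ) * (Qz z i).coeff n) := by
    intro i
    exact double_sum N hN (univ.erase i) z (hQcard i) m n hmN hnN
  have hPcard : #(univ : Finset (Fin M₁)) < N := by
    rw [Finset.card_univ, Fintype.card_fin]; exact hMN
  have hS : ∀ a b : ℕ, a < N → b < N →
      (∑ γ : Fin N, ∑ δ : Fin N,
        (starRingEnd ℂ) (η N γ) ^ a * (starRingEnd ℂ) (η N δ) ^ b *
          ∏ i : Fin M₁, ((η N γ - z i) * (η N δ - z i)))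
      = ((N : ℂ) * (Pz z).coeff a) * ((N : ℂ) * (Pz z).coeff b) := by
    intro a b ha hb
    exact double_sum N hN univ z hPcard a b ha hb
  -- Left-hand side
  have hLHS : (∑ i : Fin M₁, ∑ k : Fin M₂,
      z i * w k * (∏ j ∈ univ.erase i, (z j - w k) / (z j - z i)) *
        (∏ l ∈ univ.erase k, (w l - z i) / (w l - w k)) *
        ∑ γ : Fin N, ∑ δ : Fin N,
          (starRingEnd ℂ) (η N γ) ^ m * (starRingEnd ℂ) (η N δ) ^ n *
            ∏ j ∈ univ.erase i, ((η N γ - z j) * (η N δ - z j)))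
      = (N : ℂ) ^ 2 * ∑ i, z i ^ 2 * (Qz z i).coeff m * (Qz z i).coeff n := by
    rw [Finset.mul_sum]
    refine Finset.sum_congr rfl fun i _ => ?_
    rw [← Finset.sum_mul, stepA h12 hM₂ z hz w hw i, hT i]
    ring
  rw [hLHS, claimC z n m hnm, hS m n hmN hnN]
  have hSum : ∑ ℓ ∈ Finset.Icc 1 (min (M₁ - m) n),
      ((m : ℂ) - n + 2 * ℓ) *
        ∑ γ : Fin N, ∑ δ : Fin N,
          (starRingEnd ℂ) (η N γ) ^ (m + ℓ) * (starRingEnd ℂ) (η N δ) ^ (n - ℓ) *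
            ∏ i : Fin M₁, ((η N γ - z i) * (η N δ - z i))
      = ∑ ℓ ∈ Finset.Icc 1 (min (M₁ - m) n),
          ((m : ℂ) - n + 2 * ℓ) *
            (((N : ℂ) * (Pz z).coeff (m + ℓ)) * ((N : ℂ) * (Pz z).coeff (n - ℓ))) := by
    refine Finset.sum_congr rfl fun ℓ hℓ => ?_
    have hmem := Finset.mem_Icc.mp hℓ
    have h1 : m + ℓ < N := by omega
    have h2 : n - ℓ < N := by omega
    rw [hS (m + ℓ) (n - ℓ) h1 h2]
  rw [hSum, mul_sub, Finset.mul_sum]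
  congr 1
  · ring
  · exact Finset.sum_congr rfl fun ℓ _ => by ring
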